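/- Let R > 0 and let c : ℕ → ℍ be such that the power series ∑_{n≥0} z^n c_n converges absolutely for every z with |z| < R. Let w ∈ ℍ be nonreal with 0 < |w| = r < R, let I = I_w, and define g on the disc {z ∈ L_I : |z| < R} by g(z) = ∑_{n≥0} z^n c_n. If g(w) = w and max{ |g(z)| : z ∈ L_I, |z| ≤ r } = r, then Im_I(∂_c g(w)) = 0, where ∂_c g(w) = ∑_{n≥1} n w^{n−1} c_n. -/

import Mathlib

noncomputable section

open Filter Metric Set

local notation "ℍ" => Quaternion ℝ

/-- The slice (complex plane) `L_I = ℝ + ℝI` through an imaginary unit `I`. -/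
def sliceL (I : ℍ) : Set ℍ := {z : ℍ | ∃ x y : ℝ, z = (x : ℍ) + y • I}

namespace SliceAuxProof

theorem coe_eq_smul_one (x : ℝ) : (x : ℍ) = x • (1:ℍ) := by ext <;> simp [Quaternion.re_one, Quaternion.imI_one, Quaternion.imJ_one, Quaternion.imK_one]

theorem re_mul_comm (a b : ℍ) : (a * b).re = (b * a).re := by
  simp [Quaternion.re_mul]; ring

theorem coe_mul_re (x : ℝ) (a : ℍ) : ((x:ℍ) * a).re = x * a.re := by
  simp [Quaternion.re_mul]

/-- The circle map `t ↦ cos t + sin t • I` in the slice. -/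
def eI (I : ℍ) (t : ℝ) : ℍ := Real.cos t • (1:ℍ) + Real.sin t • I

variable {I : ℍ}

theorem eI_zero : eI I 0 = 1 := by simp [eI]

theorem eI_mul (hII : I * I = -1) (s t : ℝ) : eI I s * eI I t = eI I (s + t) := by
  simp only [eI, Real.cos_add, Real.sin_add, mul_add, add_mul, smul_mul_assoc,
    mul_smul_comm, smul_smul, hII, one_mul, mul_one]
  module

theorem eI_pow (hII : I * I = -1) (t : ℝ) (n : ℕ) : (eI I t) ^ n = eI I (n * t) := by
  induction n with
  | zero => simp [eI_zero]
  | succ n ih =>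
      rw [pow_succ, ih, eI_mul hII]
      congr 1
      push_cast
      ring

theorem star_eI (hIre : I.re = 0) (t : ℝ) : star (eI I t) = eI I (-t) := by
  have hs : star I = -I := Quaternion.star_eq_neg.mpr hIre
  simp [eI, hs, star_smul, smul_neg, neg_smul]

theorem norm_eI (hII : I * I = -1) (hIre : I.re = 0) (t : ℝ) : ‖eI I t‖ = 1 := by
  have h1 : eI I t * star (eI I t) = 1 := by
    rw [star_eI hIre, eI_mul hII, add_neg_cancel, eI_zero]
  have h2 : Quaternion.normSq (eI I t) = 1 := by
    have h3 := Quaternion.self_mul_star (eI I t)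
    refine Quaternion.coe_injective ?_
    rw [Quaternion.coe_one, ← h3, h1]
  have h4 := Quaternion.normSq_eq_norm_mul_self (eI I t)
  nlinarith [norm_nonneg (eI I t)]

theorem hasDerivAt_eI (hII : I * I = -1) (t : ℝ) :
    HasDerivAt (eI I) (I * eI I t) t := by
  have hc : HasDerivAt (fun t : ℝ => Real.cos t • (1:ℍ)) ((-Real.sin t) • (1:ℍ)) t :=
    (Real.hasDerivAt_cos t).smul_const 1
  have hs : HasDerivAt (fun t : ℝ => Real.sin t • I) (Real.cos t • I) t :=
    (Real.hasDerivAt_sin t).smul_const I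
  have h := hc.add hs
  refine h.congr_deriv ?_
  simp only [eI, mul_add, mul_smul_comm, hII, mul_one]
  module

theorem mul_mem_slice (hII : I * I = -1) {a b : ℍ} (ha : a ∈ sliceL I)
    (hb : b ∈ sliceL I) : a * b ∈ sliceL I := by
  obtain ⟨x, y, rfl⟩ := ha
  obtain ⟨u, v, rfl⟩ := hb
  refine ⟨x*u - y*v, x*v + y*u, ?_⟩
  simp only [coe_eq_smul_one, mul_add, add_mul, smul_mul_assoc, mul_smul_comm,
    smul_smul, hII, one_mul, mul_one]
  module

end SliceAuxProof

open SliceAuxProof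

/-- If a quaternionic power series `g(z) = ∑ z^n c_n` (absolutely convergent for `|z| < R`)
restricted to the slice `L_{I_w}` fixes a nonreal point `w` with `|w| = r` and satisfies
`max_{z ∈ L_{I_w}, |z| ≤ r} |g(z)| = r`, then `Im_{I_w}(∂_c g(w)) = 0`,
i.e. `Re(∂_c g(w) · I_w) = 0`. -/
theorem slice_deriv_real_at_boundary_fixed_point
    (R : ℝ) (hR : 0 < R) (c : ℕ → ℍ)
    (hconv : ∀ z : ℍ, ‖z‖ < R → Summable fun n : ℕ => ‖z ^ n * c n‖)
    (w : ℍ) (hw : w.im ≠ 0) (r : ℝ) (hr0 : 0 < r) (hrR : r < R) (hwr : ‖w‖ = r)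
    (I : ℍ) (hI : I = ‖w.im‖⁻¹ • w.im)
    (g : ℍ → ℍ) (hg : ∀ z : ℍ, g z = ∑' n : ℕ, z ^ n * c n)
    (hfix : g w = w)
    (hmax : ∀ z ∈ sliceL I, ‖z‖ ≤ r → ‖g z‖ ≤ r) :
    ((∑' n : ℕ, ((n : ℝ) + 1) • (w ^ n * c (n + 1))) * I).re = 0 := by
  classical
  -- basic facts about I
  have hwim : ‖w.im‖ ≠ 0 := norm_ne_zero_iff.mpr hw
  have hIre : I.re = 0 := by rw [hI]; simp
  have hInorm : ‖I‖ = 1 := by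
    rw [hI, norm_smul, norm_inv, norm_norm, inv_mul_cancel₀ hwim]
  have hII : I * I = -1 := by
    have hsI : star I = -I := Quaternion.star_eq_neg.mpr hIre
    have h1 := Quaternion.self_mul_star I
    have h2 : Quaternion.normSq I = 1 := by
      rw [Quaternion.normSq_eq_norm_mul_self, hInorm, one_mul]
    rw [hsI, h2, mul_neg, Quaternion.coe_one] at h1
    exact neg_eq_iff_eq_neg.mp h1
  -- w lies in the slice and commutes with I
  have him : ‖w.im‖ • I = w.im := by
    rw [hI, smul_smul, mul_inv_cancel₀ hwim, one_smul]
  have hwslice : w ∈ sliceL I := ⟨w.re, ‖w.im‖, by rw [him, Quaternion.re_add_im]⟩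
  have hIw : Commute I w := by
    conv_rhs => rw [← Quaternion.re_add_im w, ← him]
    exact ((Quaternion.coe_commute w.re I).symm).add_right ((Commute.refl I).smul_right _)
  have hwe : ∀ t : ℝ, Commute w (eI I t) := fun t =>
    (((Commute.one_right w).smul_right _).add_right ((hIw.symm).smul_right _))
  have heslice : ∀ t : ℝ, eI I t ∈ sliceL I := fun t =>
    ⟨Real.cos t, Real.sin t, by rw [coe_eq_smul_one]; rfl⟩
  -- radius ρ between r and R, coefficient bound
  set ρ : ℝ := (r + R) / 2 with hρ
  have hρr : r < ρ := by simp only [hρ]; linarith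
  have hρR : ρ < R := by simp only [hρ]; linarith
  have hρ0 : 0 < ρ := by linarith
  have hsumρ : Summable (fun n : ℕ => ρ ^ n * ‖c n‖) := by
    have h := hconv (ρ : ℍ) (by rw [Quaternion.norm_coe, Real.norm_eq_abs, abs_of_pos hρ0]; exact hρR)
    have heq : ∀ n : ℕ, ‖(ρ:ℍ) ^ n * c n‖ = ρ ^ n * ‖c n‖ := fun n => by
      rw [norm_mul, norm_pow, Quaternion.norm_coe, Real.norm_eq_abs, abs_of_pos hρ0]
    exact (summable_congr heq).mp h
  set C : ℝ := ∑' n : ℕ, ρ ^ n * ‖c n‖ with hCdef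
  have hCb : ∀ n : ℕ, ρ ^ n * ‖c n‖ ≤ C :=
    fun n => hsumρ.le_tsum n (fun m _ => by positivity)
  -- summable derivative bound
  set u : ℕ → ℝ := fun n => (n : ℝ) * (r ^ n * ‖c n‖) with hudef
  have hu : Summable u := by
    have hlt : ‖r / ρ‖ < 1 := by
      rw [Real.norm_eq_abs, abs_of_pos (by positivity)]
      exact (div_lt_one hρ0).mpr hρr
    have hgeo : Summable (fun n : ℕ => (n : ℝ) * (r / ρ) ^ n) := by
      simpa using summable_pow_mul_geometric_of_norm_lt_one 1 hlt
    refine Summable.of_nonneg_of_le (fun n => by positivity) (fun n => ?_) (hgeo.mul_left C)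
    have hrn : r ^ n = (r / ρ) ^ n * ρ ^ n := by
      rw [div_pow, div_mul_cancel₀]
      positivity
    have h1 : u n = ((n : ℝ) * (r / ρ) ^ n) * (ρ ^ n * ‖c n‖) := by
      rw [hudef]; simp only; rw [hrn]; ring
    rw [h1]
    have h2 := mul_le_mul_of_nonneg_left (hCb n) (by positivity : (0:ℝ) ≤ (n : ℝ) * (r / ρ) ^ n)
    linarith
  -- the series of functions and termwise derivatives
  have hterm : ∀ (n : ℕ) (y : ℝ),
      HasDerivAt (fun t : ℝ => w ^ n * eI I ((n : ℝ) * t) * c n)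
        (w ^ n * ((n : ℝ) • (I * eI I ((n : ℝ) * y))) * c n) y := by
    intro n y
    have h1 : HasDerivAt (fun t : ℝ => (n : ℝ) * t) (n : ℝ) y := by
      simpa using (hasDerivAt_id y).const_mul (n : ℝ)
    have h2 : HasDerivAt (fun t : ℝ => eI I ((n : ℝ) * t))
        ((n : ℝ) • (I * eI I ((n : ℝ) * y))) y :=
      (hasDerivAt_eI hII ((n : ℝ) * y)).scomp y h1
    exact (h2.const_mul (w ^ n)).mul_const (c n)
  have hbound : ∀ (n : ℕ) (y : ℝ),
      ‖w ^ n * ((n : ℝ) • (I * eI I ((n : ℝ) * y))) * c n‖ ≤ u n := by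
    intro n y
    have : ‖w ^ n * ((n : ℝ) • (I * eI I ((n : ℝ) * y))) * c n‖
        = r ^ n * ((n : ℝ) * 1) * ‖c n‖ := by
      rw [norm_mul, norm_mul, norm_pow, hwr, norm_smul, norm_mul, hInorm,
        norm_eI hII hIre, Real.norm_natCast, one_mul]
    rw [this, hudef]
    exact le_of_eq (by ring)
  have hsumw : Summable (fun n : ℕ => w ^ n * c n) :=
    (hconv w (by rw [hwr]; exact hrR)).of_norm
  have hg0 : Summable (fun n : ℕ => w ^ n * eI I ((n : ℝ) * 0) * c n) := by
    have : ∀ n : ℕ, w ^ n * eI I ((n : ℝ) * 0) * c n = w ^ n * c n := fun n => by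
      rw [mul_zero, eI_zero, mul_one]
    exact (summable_congr this).mpr hsumw
  -- differentiate the sum
  have hF : HasDerivAt (fun t : ℝ => ∑' n : ℕ, w ^ n * eI I ((n : ℝ) * t) * c n)
      (∑' n : ℕ, w ^ n * ((n : ℝ) • (I * eI I ((n : ℝ) * 0))) * c n) 0 :=
    hasDerivAt_tsum hu hterm hbound hg0 0
  set F : ℝ → ℍ := fun t => ∑' n : ℕ, w ^ n * eI I ((n : ℝ) * t) * c n with hFdef
  set D : ℍ := ∑' n : ℕ, ((n : ℝ) + 1) • (w ^ n * c (n + 1)) with hDdef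
  -- identify the derivative
  have hderiv_eq : (∑' n : ℕ, w ^ n * ((n : ℝ) • (I * eI I ((n : ℝ) * 0))) * c n)
      = ∑' n : ℕ, (n : ℝ) • (w ^ n * I * c n) := by
    refine tsum_congr fun n => ?_
    rw [mul_zero, eI_zero, mul_one, mul_smul_comm, smul_mul_assoc]
  have hD'sum : Summable (fun n : ℕ => (n : ℝ) • (w ^ n * I * c n)) := by
    refine Summable.of_norm_bounded hu fun n => ?_
    rw [norm_smul, norm_mul, norm_mul, norm_pow, hwr, hInorm, Real.norm_natCast, mul_one]
  have hD' : (∑' n : ℕ, (n : ℝ) • (w ^ n * I * c n)) = w * I * D := by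
    rw [hD'sum.tsum_eq_zero_add]
    simp only [Nat.cast_zero, zero_smul, zero_add]
    rw [hDdef, ← tsum_mul_left]
    refine tsum_congr fun n => ?_
    have hcn : I * w ^ n = w ^ n * I := (hIw.pow_right n).eq
    rw [mul_smul_comm, Nat.cast_succ]
    congr 1
    rw [pow_succ', mul_assoc w (w ^ n) I, ← hcn]
    noncomm_ring
  rw [hderiv_eq, hD'] at hF
  -- F 0 = w
  have hF0 : F 0 = w := by
    rw [hFdef]
    simp only
    have : ∀ n : ℕ, w ^ n * eI I ((n : ℝ) * 0) * c n = w ^ n * c n := fun n => by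
      rw [mul_zero, eI_zero, mul_one]
    rw [tsum_congr this, ← hg, hfix]
  -- ‖F t‖ ≤ r for all t
  have hFle : ∀ t : ℝ, ‖F t‖ ≤ r := by
    intro t
    have hEe : F t = g (w * eI I t) := by
      rw [hFdef, hg]
      refine (tsum_congr fun n => ?_).symm
      rw [(hwe t).mul_pow, eI_pow hII]
    have hmem : w * eI I t ∈ sliceL I := mul_mem_slice hII hwslice (heslice t)
    have hnrm : ‖w * eI I t‖ = r := by
      rw [norm_mul, norm_eI hII hIre, mul_one, hwr]
    rw [hEe]
    exact hmax _ hmem (le_of_eq hnrm)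
  -- local max of the squared norm at 0
  have hh : HasDerivAt (fun t : ℝ => (inner ℝ (F t) (F t) : ℝ))
      ((inner ℝ (F 0) (w * I * D) : ℝ) + (inner ℝ (w * I * D) (F 0) : ℝ)) 0 :=
    HasDerivAt.inner ℝ hF hF
  have hloc : IsLocalMax (fun t : ℝ => (inner ℝ (F t) (F t) : ℝ)) 0 := by
    refine Filter.Eventually.of_forall fun t => ?_
    simp only [real_inner_self_eq_norm_sq]
    have h1 : ‖F t‖ ≤ ‖F 0‖ := by rw [hF0, hwr]; exact hFle t
    exact pow_le_pow_left₀ (norm_nonneg _) h1 2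
  have hzero := hloc.hasDerivAt_eq_zero hh
  rw [hF0] at hzero
  have hinner : (inner ℝ (w * I * D) w : ℝ) = 0 := by
    have hcomm2 : (inner ℝ w (w * I * D) : ℝ) = inner ℝ (w * I * D) w :=
      real_inner_comm _ _
    linarith
  -- translate to the real part statement
  rw [Quaternion.inner_def] at hinner
  have hre1 : (w * I * D * star w).re = (star w * (w * I * D)).re := re_mul_comm _ _
  have hre2 : star w * (w * I * D) = (star w * w) * (I * D) := by
    noncomm_ring
  have hns : Quaternion.normSq w = r * r := by
    rw [Quaternion.normSq_eq_norm_mul_self, hwr]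
  have hsw : star w * w = ((r * r : ℝ) : ℍ) := by
    rw [Quaternion.star_mul_self w, hns]
  have hfin : r * r * (I * D).re = 0 := by
    rw [hre1, hre2, hsw, coe_mul_re] at hinner
    exact hinner
  have hIDre : (I * D).re = 0 := by
    have hrr : r * r ≠ 0 := by positivity
    exact (mul_eq_zero.mp hfin).resolve_left hrr
  rw [← re_mul_comm]
  exact hIDre
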